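/- arXiv:0905.4332 — 2 statements merged into one kernel-verified Lean document; each statement's English description precedes it below -/
import Mathlib

section
/- If L contains negation and for every class C ⊆ 𝓜 there exists an L-compact class C' satisfying exactly the same L-formulas as C, then L is compact (every finitely satisfiable set of L-formulas is satisfiable in 𝓜). -/
theorem compact_classes_imply_compact_logic
    {𝓜 L : Type*} (sat : 𝓜 → L → Prop)
    (hneg : ∀ φ : L, ∃ ψ : L, ∀ M, sat M ψ ↔ ¬ sat M φ)
    (hand : ∀ φ ψ : L, ∃ χ : L, ∀ M, sat M χ ↔ (sat M φ ∧ sat M ψ))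
    (h : ∀ C : Set 𝓜, ∃ C' : Set 𝓜,
      (∀ Sig : Set L,
        (∀ Δ ⊆ Sig, Δ.Finite → ∃ M ∈ C', ∀ φ ∈ Δ, sat M φ) →
        ∃ M ∈ C', ∀ φ ∈ Sig, sat M φ) ∧
      (∀ φ : L, (∀ M ∈ C, sat M φ) ↔ (∀ M ∈ C', sat M φ))) :
    ∀ Sig : Set L,
      (∀ Δ ⊆ Sig, Δ.Finite → ∃ M : 𝓜, ∀ φ ∈ Δ, sat M φ) →
      ∃ M : 𝓜, ∀ φ ∈ Sig, sat M φ := by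
  -- finite nonempty conjunctions
  have hconj : ∀ Δ : Finset L, Δ.Nonempty →
      ∃ χ : L, ∀ M, sat M χ ↔ ∀ φ ∈ Δ, sat M φ := by
    intro Δ hΔ
    induction hΔ using Finset.Nonempty.cons_induction with
    | singleton a => exact ⟨a, by simp⟩
    | cons a s ha hs ih =>
      obtain ⟨χ, hχ⟩ := ih
      obtain ⟨χ', hχ'⟩ := hand a χ
      refine ⟨χ', fun M => ?_⟩
      rw [hχ' M]
      simp only [Finset.mem_cons]
      constructor
      · rintro ⟨h1, h2⟩ φ (rfl | hφ)
        · exact h1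
        · exact (hχ M).1 h2 φ hφ
      · intro hall
        exact ⟨hall a (Or.inl rfl), (hχ M).2 fun φ hφ => hall φ (Or.inr hφ)⟩
  intro Sig hfin
  obtain ⟨M0, -⟩ := hfin ∅ (Set.empty_subset _) Set.finite_empty
  rcases Set.eq_empty_or_nonempty Sig with rfl | ⟨φ0, hφ0⟩
  · exact ⟨M0, by simp⟩
  obtain ⟨C', hcomp, hsame⟩ := h Set.univ
  -- C' is nonempty
  have hC'ne : ∃ M, M ∈ C' := by
    by_contra hemp
    push_neg at hemp
    obtain ⟨ψ0, hψ0⟩ := hneg φ0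
    have h1 : ∀ M, sat M φ0 :=
      fun M => (hsame φ0).2 (fun M' hM' => absurd hM' (hemp M')) M trivial
    have h2 : ∀ M, sat M ψ0 :=
      fun M => (hsame ψ0).2 (fun M' hM' => absurd hM' (hemp M')) M trivial
    exact (hψ0 M0).1 (h2 M0) (h1 M0)
  have hkey : ∀ Δ ⊆ Sig, Δ.Finite → ∃ M ∈ C', ∀ φ ∈ Δ, sat M φ := ?_
  · obtain ⟨M', hM'⟩ := hcomp Sig hkey
    exact ⟨M', hM'.2⟩
  intro Δ hΔsub hΔfin
  rcases Set.eq_empty_or_nonempty Δ with rfl | hΔne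
  · obtain ⟨M, hM⟩ := hC'ne
    exact ⟨M, hM, by simp⟩
  -- Δ finite nonempty: form conjunction
  obtain ⟨χ, hχ⟩ := hconj hΔfin.toFinset (by simpa using hΔne)
  obtain ⟨ψ, hψ⟩ := hneg χ
  obtain ⟨M, hM⟩ := hfin Δ hΔsub hΔfin
  have hMχ : sat M χ := (hχ M).2 (by intro φ hφ; exact hM φ (hΔfin.mem_toFinset.mp hφ))
  have hnot : ¬ ∀ M ∈ C', sat M ψ := by
    intro hall
    have := (hsame ψ).2 hall M trivial
    exact (hψ M).1 this hMχ
  push_neg at hnot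
  obtain ⟨N, hN, hNψ⟩ := hnot
  have hNχ : sat N χ := by
    by_contra hc
    exact hNψ ((hψ N).2 hc)
  exact ⟨N, hN, fun φ hφ => (hχ N).1 hNχ φ (hΔfin.mem_toFinset.mpr hφ)⟩
end

section
/- If M,s and N,t are bisimilar pointed Kripke models and N,t is modally saturated (m-saturated), then M,s is m-saturated. -/
/-- Kripke models over proposition letters `P`. -/
structure Kripke (P : Type*) where
  W : Type*
  R : W → W → Prop
  V : W → P → Prop

/-- Basic modal formulas over proposition letters `P`. -/
inductive MF (P : Type*) where
  | tru : MF P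
  | prop : P → MF P
  | neg : MF P → MF P
  | and : MF P → MF P → MF P
  | dia : MF P → MF P

/-- Satisfaction of basic modal formulas. -/
def msat {P : Type*} (K : Kripke P) : K.W → MF P → Prop
  | _, MF.tru => True
  | w, MF.prop p => K.V w p
  | w, MF.neg φ => ¬ msat K w φ
  | w, MF.and φ ψ => msat K w φ ∧ msat K w ψ
  | w, MF.dia φ => ∃ v, K.R w v ∧ msat K v φ

/-- `Z` is a bisimulation between `K₁` and `K₂`. -/
def IsBisim {P : Type*} (K₁ K₂ : Kripke P) (Z : K₁.W → K₂.W → Prop) : Prop :=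
  ∀ w v, Z w v →
    (∀ p : P, K₁.V w p ↔ K₂.V v p) ∧
    (∀ w', K₁.R w w' → ∃ v', K₂.R v v' ∧ Z w' v') ∧
    (∀ v', K₂.R v v' → ∃ w', K₁.R w w' ∧ Z w' v')

/-- The pointed model `K, s` is m-saturated. -/
def MSaturated {P : Type*} (K : Kripke P) (s : K.W) : Prop :=
  ∀ w : K.W, Relation.ReflTransGen K.R s w →
    ∀ Sig : Set (MF P),
      (∀ Δ ⊆ Sig, Δ.Finite → ∃ u, K.R w u ∧ ∀ φ ∈ Δ, msat K u φ) →
      ∃ u, K.R w u ∧ ∀ φ ∈ Sig, msat K u φ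


lemma msat_iff_of_bisim {P : Type*} (K₁ K₂ : Kripke P) (Z : K₁.W → K₂.W → Prop)
    (hZ : IsBisim K₁ K₂ Z) (φ : MF P) :
    ∀ w v, Z w v → (msat K₁ w φ ↔ msat K₂ v φ) := by
  induction φ with
  | tru => intro w v _; simp [msat]
  | prop p => intro w v h; exact (hZ w v h).1 p
  | neg φ ih => intro w v h; simp only [msat]; rw [ih w v h]
  | and φ ψ ih1 ih2 => intro w v h; simp only [msat]; rw [ih1 w v h, ih2 w v h]
  | dia φ ih =>
    intro w v h
    constructor
    · rintro ⟨w', hw', hm⟩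
      obtain ⟨v', hv', hz⟩ := (hZ w v h).2.1 w' hw'
      exact ⟨v', hv', (ih w' v' hz).mp hm⟩
    · rintro ⟨v', hv', hm⟩
      obtain ⟨w', hw', hz⟩ := (hZ w v h).2.2 v' hv'
      exact ⟨w', hw', (ih w' v' hz).mpr hm⟩

theorem msaturated_of_bisimilar
    {P : Type*} (K₁ K₂ : Kripke P) (s : K₁.W) (t : K₂.W)
    (Z : K₁.W → K₂.W → Prop) (hZ : IsBisim K₁ K₂ Z) (hst : Z s t)
    (hsat : MSaturated K₂ t) :
    MSaturated K₁ s := by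
  intro w hw Sig hfin
  -- find v reachable from t with Z w v
  obtain ⟨v, hv, hzwv⟩ : ∃ v, Relation.ReflTransGen K₂.R t v ∧ Z w v := by
    clear hfin Sig
    induction hw with
    | refl => exact ⟨t, Relation.ReflTransGen.refl, hst⟩
    | tail _ hstep ih =>
      obtain ⟨v, hv, hz⟩ := ih
      obtain ⟨v', hv', hz'⟩ := (hZ _ _ hz).2.1 _ hstep
      exact ⟨v', hv.tail hv', hz'⟩
  obtain ⟨u₂, hu₂, hsig⟩ := hsat v hv Sig (by
    intro Δ hΔ hΔfin
    obtain ⟨u, hu, hΔsat⟩ := hfin Δ hΔ hΔfin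
    obtain ⟨u', hu', hz⟩ := (hZ _ _ hzwv).2.1 _ hu
    exact ⟨u', hu', fun φ hφ => (msat_iff_of_bisim K₁ K₂ Z hZ φ _ _ hz).mp (hΔsat φ hφ)⟩)
  obtain ⟨u₁, hu₁, hz⟩ := (hZ _ _ hzwv).2.2 _ hu₂
  exact ⟨u₁, hu₁, fun φ hφ => (msat_iff_of_bisim K₁ K₂ Z hZ φ _ _ hz).mpr (hsig φ hφ)⟩
end
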